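/- Let ξ be a standard normal random variable and a₁, a₂, b₁, b₂ ∈ ℝ with b₁ ≠ b₂. Then E[max(a₁ + b₁ξ, a₂ + b₂ξ)] − max(a₁, a₂) = −|a₂ − a₁|·Φ(−|a₂ − a₁|/|b₁ − b₂|) + |b₁ − b₂|·φ(|a₂ − a₁|/|b₁ − b₂|). -/

import Mathlib

open MeasureTheory ProbabilityTheory Real

noncomputable def stdNormalPDF (x : ℝ) : ℝ := (Real.sqrt (2 * π))⁻¹ * Real.exp (-x ^ 2 / 2)

noncomputable def stdNormalCDF (x : ℝ) : ℝ := ∫ u in Set.Iic x, stdNormalPDF u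

open Set Filter Topology
open scoped NNReal ENNReal

lemma phi_eq : stdNormalPDF = gaussianPDFReal 0 1 := by
  funext x
  simp [stdNormalPDF, gaussianPDFReal]

lemma phi_neg (x : ℝ) : stdNormalPDF (-x) = stdNormalPDF x := by
  simp [stdNormalPDF, neg_sq]

lemma int_phi : Integrable stdNormalPDF := by
  rw [phi_eq]; exact integrable_gaussianPDFReal 0 1

lemma integral_phi : ∫ x, stdNormalPDF x = 1 := by
  rw [phi_eq]; exact integral_gaussianPDFReal_eq_one 0 one_ne_zero

lemma int_xphi : Integrable (fun x => x * stdNormalPDF x) := by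
  have h : Integrable (fun x : ℝ => (Real.sqrt (2 * π))⁻¹ * (x * Real.exp (-(1/2) * x ^ 2))) :=
    (integrable_mul_exp_neg_mul_sq (by norm_num : (0:ℝ) < 1/2)).const_mul _
  have heq : (fun x => x * stdNormalPDF x)
      = fun x : ℝ => (Real.sqrt (2 * π))⁻¹ * (x * Real.exp (-(1/2) * x ^ 2)) := by
    funext x; simp only [stdNormalPDF]; ring_nf
  rw [heq]; exact h

lemma hasDerivAt_negphi (x : ℝ) :
    HasDerivAt (fun y => -stdNormalPDF y) (x * stdNormalPDF x) x := by
  have h1 : HasDerivAt (fun y : ℝ => -y ^ 2 / 2) (-x) x := by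
    have := (hasDerivAt_pow 2 x).neg.div_const 2
    refine this.congr_deriv ?_; push_cast; ring
  have h2 := (h1.exp.const_mul (Real.sqrt (2 * π))⁻¹).neg
  refine h2.congr_deriv ?_
  simp only [stdNormalPDF]; ring

lemma phi_tendsto_top : Tendsto stdNormalPDF atTop (𝓝 0) := by
  have h1 : Tendsto (fun x : ℝ => -x ^ 2 / 2) atTop atBot := by
    have h := tendsto_pow_atTop (two_ne_zero) (α := ℝ)
    exact (h.const_mul_atTop_of_neg (by norm_num : (-(1:ℝ)/2) < 0)).congr (fun x => by ring)
  have h3 := (Real.tendsto_exp_atBot.comp h1).const_mul (Real.sqrt (2 * π))⁻¹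
  unfold stdNormalPDF
  simpa only [Function.comp_def, mul_zero] using h3

lemma phi_tendsto_bot : Tendsto stdNormalPDF atBot (𝓝 0) := by
  have h2 : Tendsto (fun x : ℝ => x ^ 2) atBot atTop := by
    have := (tendsto_pow_atTop (two_ne_zero) (α := ℝ)).comp tendsto_neg_atBot_atTop
    refine this.congr fun x => ?_
    simp [Function.comp, neg_pow]
  have h1 : Tendsto (fun x : ℝ => -x ^ 2 / 2) atBot atBot :=
    (h2.const_mul_atTop_of_neg (by norm_num : (-(1:ℝ)/2) < 0)).congr (fun x => by ring)
  have h3 := (Real.tendsto_exp_atBot.comp h1).const_mul (Real.sqrt (2 * π))⁻¹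
  unfold stdNormalPDF
  simpa only [Function.comp_def, mul_zero] using h3

lemma int_Ioi_xphi (t : ℝ) : ∫ x in Ioi t, x * stdNormalPDF x = stdNormalPDF t := by
  have := integral_Ioi_of_hasDerivAt_of_tendsto' (f := fun y => -stdNormalPDF y)
    (f' := fun x => x * stdNormalPDF x) (a := t) (m := 0)
    (fun x _ => hasDerivAt_negphi x) int_xphi.integrableOn
    (by simpa using phi_tendsto_top.neg)
  simpa using this

lemma int_Iic_xphi (t : ℝ) : ∫ x in Iic t, x * stdNormalPDF x = -stdNormalPDF t := by
  have := integral_Iic_of_hasDerivAt_of_tendsto' (f := fun y => -stdNormalPDF y)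
    (f' := fun x => x * stdNormalPDF x) (a := t) (m := 0)
    (fun x _ => hasDerivAt_negphi x) int_xphi.integrableOn
    (by simpa using phi_tendsto_bot.neg)
  simpa using this

lemma int_Ioi_phi (t : ℝ) : ∫ x in Ioi t, stdNormalPDF x = 1 - stdNormalCDF t := by
  have := intervalIntegral.integral_Iic_add_Ioi (b := t) (μ := volume)
    int_phi.integrableOn int_phi.integrableOn
  rw [integral_phi] at this
  unfold stdNormalCDF; linarith

lemma cdf_neg (t : ℝ) : stdNormalCDF (-t) = 1 - stdNormalCDF t := by
  have h : ∫ x in Iic (-t), stdNormalPDF x = ∫ x in Ioi t, stdNormalPDF x := by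
    rw [← integral_comp_neg_Ioi]
    refine setIntegral_congr_fun measurableSet_Ioi fun x _ => ?_
    simp [stdNormalPDF, neg_sq]
  show ∫ x in Iic (-t), stdNormalPDF x = _
  rw [h, int_Ioi_phi]

lemma integral_xphi : ∫ x, x * stdNormalPDF x = 0 := by
  have := intervalIntegral.integral_Iic_add_Ioi (b := 0) (μ := volume)
    int_xphi.integrableOn int_xphi.integrableOn
  rw [int_Iic_xphi, int_Ioi_xphi] at this
  linarith

lemma cdf_def (t : ℝ) : ∫ x in Iic t, stdNormalPDF x = stdNormalCDF t := rfl

lemma integral_gaussianReal_eq (f : ℝ → ℝ) :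
    ∫ x, f x ∂(gaussianReal 0 1) = ∫ x, stdNormalPDF x * f x := by
  rw [gaussianReal_of_var_ne_zero 0 one_ne_zero]
  have hpdf : gaussianPDF 0 1 = fun x => ((Real.toNNReal (gaussianPDFReal 0 1 x) : ℝ≥0) : ℝ≥0∞) := by
    funext x; rw [gaussianPDF]; rfl
  rw [hpdf, integral_withDensity_eq_integral_smul
    ((measurable_gaussianPDFReal 0 1).real_toNNReal) f]
  refine integral_congr_ae (Filter.Eventually.of_forall fun x => ?_)
  show (gaussianPDFReal 0 1 x).toNNReal • f x = stdNormalPDF x * f x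
  rw [NNReal.smul_def, smul_eq_mul, Real.coe_toNNReal _ (gaussianPDFReal_nonneg 0 1 x), ← phi_eq]

lemma int_affine_phi (a b : ℝ) : Integrable (fun x => stdNormalPDF x * (a + b * x)) := by
  have h := (int_phi.const_mul a).add (int_xphi.const_mul b)
  refine h.congr (Filter.Eventually.of_forall fun x => ?_)
  simp only [Pi.add_apply]; ring

lemma integral_affine_phi (a b : ℝ) : ∫ x, stdNormalPDF x * (a + b * x) = a := by
  have h : (fun x => stdNormalPDF x * (a + b * x))
      = fun x => a * stdNormalPDF x + b * (x * stdNormalPDF x) := by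
    funext x; ring
  rw [h, integral_add (int_phi.const_mul a) (int_xphi.const_mul b),
    integral_const_mul, integral_const_mul, integral_phi, integral_xphi]
  ring

lemma setS_meas (c d : ℝ) : MeasurableSet {x : ℝ | 0 ≤ c + d * x} :=
  measurableSet_le measurable_const (by fun_prop)

lemma hind (c d : ℝ) : (fun x => stdNormalPDF x * max 0 (c + d * x))
    = Set.indicator {x : ℝ | 0 ≤ c + d * x} (fun x => stdNormalPDF x * (c + d * x)) := by
  funext x
  by_cases h : 0 ≤ c + d * x
  · simp [Set.indicator_apply, Set.mem_setOf_eq, h, max_eq_right h]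
  · simp [Set.indicator_apply, Set.mem_setOf_eq, h, max_eq_left (le_of_not_ge h)]

lemma int_maxphi (c d : ℝ) : Integrable (fun x => stdNormalPDF x * max 0 (c + d * x)) := by
  rw [hind]
  exact (int_affine_phi c d).indicator (setS_meas c d)

lemma key (c d : ℝ) (hd : d ≠ 0) :
    ∫ x, stdNormalPDF x * max 0 (c + d * x)
      = c * stdNormalCDF (c / |d|) + |d| * stdNormalPDF (c / |d|) := by
  rw [hind, integral_indicator (setS_meas c d)]
  have hexp : ∀ s : Set ℝ, MeasurableSet s → ∫ x in s, stdNormalPDF x * (c + d * x)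
      = c * (∫ x in s, stdNormalPDF x) + d * ∫ x in s, x * stdNormalPDF x := by
    intro s hs
    have h : (fun x => stdNormalPDF x * (c + d * x))
        = fun x => c * stdNormalPDF x + d * (x * stdNormalPDF x) := by funext x; ring
    rw [h, integral_add (int_phi.integrableOn.const_mul c) (int_xphi.integrableOn.const_mul d),
      integral_const_mul, integral_const_mul]
  rcases lt_or_gt_of_ne hd with hneg | hpos
  · have hset : {x : ℝ | 0 ≤ c + d * x} = Iic (-c / d) := by
      ext x
      simp only [mem_setOf_eq, mem_Iic]
      rw [le_div_iff_of_neg hneg]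
      constructor <;> intro h <;> linarith
    have ht : -c / d = c / |d| := by rw [abs_of_neg hneg, div_neg, neg_div]
    rw [hset, ht, hexp _ measurableSet_Iic, int_Iic_xphi, cdf_def, abs_of_neg hneg]
    ring
  · have hset : {x : ℝ | 0 ≤ c + d * x} = Ici (-c / d) := by
      ext x
      simp only [mem_setOf_eq, mem_Ici]
      rw [div_le_iff₀ hpos]
      constructor <;> intro h <;> linarith
    rw [hset, integral_Ici_eq_integral_Ioi, hexp _ measurableSet_Ioi, int_Ioi_xphi,
      int_Ioi_phi]
    have ht : -c / d = -(c / |d|) := by rw [abs_of_pos hpos]; ring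
    rw [ht, cdf_neg, phi_neg, abs_of_pos hpos]
    ring

/-- Closed form of the one-step knowledge gradient value. -/
theorem stmt_6 (a₁ a₂ b₁ b₂ : ℝ) (hb : b₁ ≠ b₂) :
    (∫ x, max (a₁ + b₁ * x) (a₂ + b₂ * x) ∂(gaussianReal 0 1)) - max a₁ a₂ =
      -|a₂ - a₁| * stdNormalCDF (-|a₂ - a₁| / |b₁ - b₂|)
        + |b₁ - b₂| * stdNormalPDF (|a₂ - a₁| / |b₁ - b₂|) := by
  have hd : b₂ - b₁ ≠ 0 := sub_ne_zero.mpr (Ne.symm hb)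
  rw [integral_gaussianReal_eq]
  have hsplit : (fun x => stdNormalPDF x * max (a₁ + b₁ * x) (a₂ + b₂ * x))
      = fun x => stdNormalPDF x * (a₁ + b₁ * x)
          + stdNormalPDF x * max 0 ((a₂ - a₁) + (b₂ - b₁) * x) := by
    funext x
    rcases le_total (a₁ + b₁ * x) (a₂ + b₂ * x) with h | h
    · rw [max_eq_right h, max_eq_right (by linarith)]; ring
    · rw [max_eq_left h, max_eq_left (by linarith)]; ring
  rw [hsplit, integral_add (int_affine_phi a₁ b₁) (int_maxphi _ _),
    integral_affine_phi, key _ _ hd]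
  rw [abs_sub_comm b₁ b₂]
  set c := a₂ - a₁ with hc
  set e := |b₂ - b₁| with he
  have hmax : max a₁ a₂ = a₁ + max 0 c := by
    rcases le_total a₁ a₂ with h | h
    · rw [max_eq_right h, max_eq_right (by simp [hc]; linarith)]; ring
    · rw [max_eq_left h, max_eq_left (by simp [hc]; linarith)]; ring
  rw [hmax]
  rcases le_total 0 c with hcp | hcn
  · rw [abs_of_nonneg hcp, max_eq_right hcp, neg_div, cdf_neg]
    ring
  · rw [abs_of_nonpos hcn, max_eq_left hcn, neg_neg, neg_div, phi_neg]
    ring
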